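/- Let G' be the graph on n vertices formed as the union of the edge sets of three independent uniformly random permutations σ₁, σ₂, σ₃ of the vertex set (with edge (v, σ_i(v)) for each v and i). Then the expected number of cycles in G' of length at most (log n)/100 is at most n^{0.1} for all sufficiently large n. -/

import Mathlib

set_option maxRecDepth 4000

open Finset

/-- The union graph of three permutations: `u ~ w` iff some `σᵢ` maps one of them to
the other. -/
def permGraph {V : Type*} [DecidableEq V] (σ₁ σ₂ σ₃ : Equiv.Perm V) : SimpleGraph V where
  Adj u w := u ≠ w ∧ (σ₁ u = w ∨ σ₁ w = u ∨ σ₂ u = w ∨ σ₂ w = u ∨ σ₃ u = w ∨ σ₃ w = u)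
  symm := by constructor; intro u w h; exact ⟨h.1.symm, by tauto⟩
  loopless := by constructor; intro u h; exact h.1 rfl

/-- The number of cycles of a graph `G` of length at most `K` (a cycle is identified with
the subgraph it traces out). -/
noncomputable def shortCycleCount {V : Type*} (G : SimpleGraph V) (K : ℝ) : ℕ :=
  {H : G.Subgraph | ∃ (v : V) (w : G.Walk v v),
      w.IsCycle ∧ (w.length : ℝ) ≤ K ∧ w.toSubgraph = H}.ncard

open SimpleGraph in
instance permGraphDecAdj {V : Type*} [DecidableEq V] (σ₁ σ₂ σ₃ : Equiv.Perm V) :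
    DecidableRel (permGraph σ₁ σ₂ σ₃).Adj := fun u w =>
  inferInstanceAs (Decidable (u ≠ w ∧ (σ₁ u = w ∨ σ₁ w = u ∨ σ₂ u = w ∨ σ₂ w = u ∨ σ₃ u = w ∨ σ₃ w = u)))

def nxt {L : ℕ} (i : Fin L) : Fin L := ⟨(i.val + 1) % L, Nat.mod_lt _ i.pos⟩

lemma nxt_inj {L : ℕ} : Function.Injective (nxt (L := L)) := by
  intro i j h
  simp only [nxt, Fin.mk.injEq] at h
  have hi := i.isLt
  have hj := j.isLt
  rcases Nat.lt_or_ge (i.val + 1) L with h1 | h1 <;> rcases Nat.lt_or_ge (j.val + 1) L with h2 | h2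
  · rw [Nat.mod_eq_of_lt h1, Nat.mod_eq_of_lt h2] at h
    exact Fin.ext (by omega)
  · rw [Nat.mod_eq_of_lt h1, show j.val + 1 = L by omega, Nat.mod_self] at h; omega
  · rw [Nat.mod_eq_of_lt h2, show i.val + 1 = L by omega, Nat.mod_self] at h; omega
  · exact Fin.ext (by omega)

lemma nxt_nxt_ne {L : ℕ} (hL : 3 ≤ L) (i : Fin L) : nxt (nxt i) ≠ i := by
  intro h'
  have hi := i.isLt
  have h : ((i.val + 1) % L + 1) % L = i.val := congrArg Fin.val h'
  rw [Nat.mod_add_mod] at h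
  rcases Nat.lt_or_ge (i.val + 1 + 1) L with h1 | h1
  · rw [Nat.mod_eq_of_lt h1] at h; omega
  · have h2 : (i.val + 1 + 1) % L = i.val + 1 + 1 - L := by
      rw [Nat.mod_eq_sub_mod h1, Nat.mod_eq_of_lt (by omega)]
    omega


section Walks
open SimpleGraph
variable {V : Type} [DecidableEq V] {G : SimpleGraph V}

lemma getVert_eq_support_getD {u x : V} (w : G.Walk u x) (i : ℕ) :
    w.getVert i = w.support.getD i x := by
  induction w generalizing i with
  | nil => cases i <;> simp [Walk.getVert]
  | cons h q ih =>
    cases i with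
    | zero => simp [Walk.getVert]
    | succ n => simpa [Walk.getVert] using ih n

lemma cycle_getVert_inj {u : V} {w : G.Walk u u} (hw : w.IsCycle)
    {i j : ℕ} (hi : i < w.length) (hj : j < w.length)
    (hij : w.getVert i = w.getVert j) : i = j := by
  have hnd : w.support.tail.Nodup := hw.2
  have hlen : w.support.tail.length = w.length := by
    have := w.length_support
    have := w.support_eq_cons
    simp [List.length_tail, w.length_support]
  have key : ∀ k (hk : k < w.length),
      w.getVert (k+1) = w.support.tail.get ⟨k, by rw [hlen]; exact hk⟩ := by
    intro k hk
    rw [getVert_eq_support_getD]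
    conv_lhs => rw [w.support_eq_cons]
    rw [List.getD_cons_succ, List.getD_eq_getElem _ _ (by omega)]
    simp [List.get_eq_getElem]
  have hne := List.nodup_iff_injective_get.mp hnd
  have h3 := hw.three_le_length
  have h0 : w.getVert 0 = w.support.tail.get ⟨w.length - 1, by rw [hlen]; omega⟩ := by
    have e : w.getVert 0 = w.getVert (w.length - 1 + 1) := by
      rw [Walk.getVert_zero, show w.length - 1 + 1 = w.length from by omega, w.getVert_length]
    rw [e, key _ (by omega)]
  have gv : ∀ k (hk : k < w.length), ∃ (m : ℕ) (hm : m < w.support.tail.length),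
      w.getVert k = w.support.tail.get ⟨m, hm⟩ ∧ (k = 0 → m = w.length - 1) ∧ (0 < k → m = k - 1) := by
    intro k hk
    rcases Nat.eq_zero_or_pos k with rfl | hkp
    · exact ⟨w.length - 1, by rw [hlen]; omega, h0, fun _ => rfl, by omega⟩
    · refine ⟨k - 1, by rw [hlen]; omega, ?_, by omega, fun _ => rfl⟩
      have e : w.getVert k = w.getVert (k - 1 + 1) := by congr 1; omega
      rw [e, key _ (by omega)]
  obtain ⟨m, hm, em, hm0, hmp⟩ := gv i hi
  obtain ⟨m', hm', em', hm0', hmp'⟩ := gv j hj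
  rw [em, em'] at hij
  have := hne hij
  simp only [Fin.mk.injEq] at this
  rcases Nat.eq_zero_or_pos i with rfl | hip <;> rcases Nat.eq_zero_or_pos j with rfl | hjp
  · rfl
  · have := hm0 rfl; have := hmp' hjp; omega
  · have := hm0' rfl; have := hmp hip; omega
  · have := hmp hip; have := hmp' hjp; omega

lemma walk_eq_of_getVert {u x : V} (w w' : G.Walk u x) (hl : w.length = w'.length)
    (hgv : ∀ i, w.getVert i = w'.getVert i) : w = w' := by
  induction w with
  | nil =>
    have : w'.length = 0 := by simpa using hl.symm
    exact (Walk.nil_iff_eq_nil.mp (Walk.length_eq_zero_iff.mp this)).symm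
  | @cons a b c h q ih =>
    cases w' with
    | nil => simp at hl
    | @cons _ b' _ h' q' =>
      have hb : b = b' := by
        have := hgv 1
        simpa [Walk.getVert_cons_succ, Walk.getVert_zero] using this
      subst hb
      have : q = q' := ih q' (by simpa using hl) (fun i => by
        have := hgv (i+1); simpa [Walk.getVert_cons_succ] using this)
      rw [this]
lemma walk_toSubgraph_eq_of_getVert {V : Type} [DecidableEq V] {G : SimpleGraph V} {u u' : V}
    (w : G.Walk u u) (w' : G.Walk u' u') (hl : w.length = w'.length)
    (hgv : ∀ i, w.getVert i = w'.getVert i) : w.toSubgraph = w'.toSubgraph := by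
  have huu : u = u' := by
    have h0 := hgv 0
    rwa [Walk.getVert_zero, Walk.getVert_zero] at h0
  subst huu
  rw [walk_eq_of_getVert w w' hl hgv]


end Walks

open SimpleGraph

variable {V : Type} [Fintype V] [DecidableEq V]

lemma card_perm_fix (A : Finset V) :
    (univ.filter (fun τ : Equiv.Perm V => ∀ a ∈ A, τ a = a)).card
      = Nat.factorial (Fintype.card V - A.card) := by
  rw [← Fintype.card_subtype]
  have e1 : {τ : Equiv.Perm V // ∀ a ∈ A, τ a = a}
      ≃ {f : Equiv.Perm V // ∀ a, ¬(a ∉ A) → f a = a} :=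
    Equiv.subtypeEquivRight (by
      intro f
      constructor
      · intro h a ha; exact h a (not_not.mp ha)
      · intro h a ha; exact h a (not_not_intro ha))
  have e2 := (Equiv.Perm.subtypeEquivSubtypePerm (fun x : V => x ∉ A)).symm
  have := Fintype.card_congr (e1.trans e2)
  rw [this, Fintype.card_perm]
  congr 1
  rw [Fintype.card_subtype_compl]
  congr 1
  simp [Fintype.card_subtype]

lemma card_perm_agree (A : Finset V) (g : V → V) :
    (univ.filter (fun σ : Equiv.Perm V => ∀ a ∈ A, σ a = g a)).card
      ≤ Nat.factorial (Fintype.card V - A.card) := by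
  rcases (univ.filter (fun σ : Equiv.Perm V => ∀ a ∈ A, σ a = g a)).eq_empty_or_nonempty with h | ⟨σ₀, hσ₀⟩
  · rw [h]; simp [Nat.factorial_pos]
  · rw [mem_filter] at hσ₀
    rw [← card_perm_fix A]
    apply Finset.card_le_card_of_injOn (fun σ => σ₀⁻¹ * σ)
    · intro σ hσ
      rw [Finset.mem_coe, mem_filter] at hσ ⊢
      refine ⟨mem_univ _, fun a ha => ?_⟩
      have : σ a = σ₀ a := (hσ.2 a ha).trans (hσ₀.2 a ha).symm
      simp [Equiv.Perm.mul_apply, this]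
    · intro x _ y _ h
      exact mul_left_cancel h

lemma card_perm_pairs {ι : Type} [Fintype ι] [DecidableEq ι] (a b : ι → V)
    (hab : ∀ i j, a i = a j → b i = b j → i = j) :
    (univ.filter (fun σ : Equiv.Perm V => ∀ i, σ (a i) = b i)).card
      ≤ Nat.factorial (Fintype.card V - Fintype.card ι) := by
  rcases (univ.filter (fun σ : Equiv.Perm V => ∀ i, σ (a i) = b i)).eq_empty_or_nonempty
    with h | ⟨σ₀, hσ₀⟩
  · rw [h]; simp [Nat.factorial_pos]
  · rw [mem_filter] at hσ₀
    have hainj : Function.Injective a := by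
      intro i j hij
      exact hab i j hij (by rw [← hσ₀.2 i, ← hσ₀.2 j, hij])
    have hsub : (univ.filter (fun σ : Equiv.Perm V => ∀ i, σ (a i) = b i))
        ⊆ (univ.filter (fun σ : Equiv.Perm V => ∀ x ∈ univ.image a, σ x = σ₀ x)) := by
      intro σ hσ
      rw [mem_filter] at hσ ⊢
      refine ⟨mem_univ _, fun x hx => ?_⟩
      obtain ⟨i, _, rfl⟩ := Finset.mem_image.mp hx
      rw [hσ.2 i, hσ₀.2 i]
    calc _ ≤ _ := Finset.card_le_card hsub
      _ ≤ _ := card_perm_agree _ _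
      _ = _ := by rw [Finset.card_image_of_injective _ hainj, Finset.card_univ]

lemma cycle_perm_count {L : ℕ} (hL3 : 3 ≤ L) (hLn : L ≤ Fintype.card V)
    (v : Fin L → V) (hv : Function.Injective v) :
    (Fintype.card V - L + 1)^L *
      (univ.filter (fun σ : Equiv.Perm V × Equiv.Perm V × Equiv.Perm V =>
        ∀ i : Fin L, (permGraph σ.1 σ.2.1 σ.2.2).Adj (v i) (v (nxt i)))).card
      ≤ 6^L * (Nat.factorial (Fintype.card V))^3 := by
  set n := Fintype.card V with hn
  set P := Equiv.Perm V
  let pick : P × P × P → Fin 3 → P := fun σ p => if p = 0 then σ.1 else if p = 1 then σ.2.1 else σ.2.2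
  let src : Fin L → Bool → V := fun i o => if o then v i else v (nxt i)
  let tgt : Fin L → Bool → V := fun i o => if o then v (nxt i) else v i
  let Sf : (Fin L → Fin 3 × Bool) → Finset (P × P × P) := fun f =>
    univ.filter (fun σ => ∀ i, (pick σ (f i).1) (src i (f i).2) = tgt i (f i).2)
  -- step 1: the event is covered by the union of the Sf
  have hsub : (univ.filter (fun σ : P × P × P =>
      ∀ i : Fin L, (permGraph σ.1 σ.2.1 σ.2.2).Adj (v i) (v (nxt i))))
      ⊆ univ.biUnion Sf := by
    intro σ hσ
    rw [mem_filter] at hσ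
    have hD := hσ.2
    classical
    refine mem_biUnion.mpr ⟨fun i =>
      if σ.1 (v i) = v (nxt i) then (0, true) else
      if σ.1 (v (nxt i)) = v i then (0, false) else
      if σ.2.1 (v i) = v (nxt i) then (1, true) else
      if σ.2.1 (v (nxt i)) = v i then (1, false) else
      if σ.2.2 (v i) = v (nxt i) then (2, true) else (2, false),
      mem_univ _, mem_filter.mpr ⟨mem_univ _, fun i => ?_⟩⟩
    have hadj := (hD i).2
    beta_reduce
    split_ifs with h1 h2 h3 h4 h5 <;> simp only [pick, src, tgt] <;> norm_num <;> tauto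
  have hcard := Finset.card_le_card hsub
  have hbi := Finset.card_biUnion_le (s := (univ : Finset (Fin L → Fin 3 × Bool))) (t := Sf)
  -- step 2 : per-f bound
  have hf : ∀ f : Fin L → Fin 3 × Bool, (n - L + 1)^L * (Sf f).card ≤ (Nat.factorial n)^3 := by
    intro f
    let I : Fin 3 → Type := fun p => {j : Fin L // (f j).1 = p}
    let F : Fin 3 → Finset P := fun p =>
      univ.filter (fun τ => ∀ j : I p, τ (src j.1 (f j.1).2) = tgt j.1 (f j.1).2)
    have hprod : Sf f ⊆ (F 0) ×ˢ ((F 1) ×ˢ (F 2)) := by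
      intro σ hσ
      rw [mem_filter] at hσ
      have key : ∀ p : Fin 3, pick σ p ∈ F p := by
        intro p
        refine mem_filter.mpr ⟨mem_univ _, fun j => ?_⟩
        have := hσ.2 j.1
        rwa [j.2] at this
      have k0 := key 0; have k1 := key 1; have k2 := key 2
      have e0 : pick σ 0 = σ.1 := by simp [pick]
      have e1 : pick σ 1 = σ.2.1 := by
        simp [pick, show (1 : Fin 3) ≠ 0 by decide]
      have e2 : pick σ 2 = σ.2.2 := by
        simp [pick, show (2 : Fin 3) ≠ 0 by decide, show (2 : Fin 3) ≠ 1 by decide]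
      rw [e0] at k0; rw [e1] at k1; rw [e2] at k2
      rw [Finset.mem_product, Finset.mem_product]
      exact ⟨k0, k1, k2⟩
    have hk : ∀ p : Fin 3, (F p).card ≤ Nat.factorial (n - Fintype.card (I p)) := by
      intro p
      apply card_perm_pairs
      rintro ⟨i, hi⟩ ⟨i', hi'⟩ hs ht
      refine Subtype.ext ?_
      dsimp only [src, tgt] at hs ht
      rcases hb : (f i).2 <;> rcases hb' : (f i').2 <;> rw [hb, hb'] at hs ht <;>
        simp only [if_true, if_false, Bool.false_eq_true, if_neg] at hs ht
      · exact nxt_inj (hv hs)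
      · -- (f i).2 = false, (f i').2 = true : hs : v (nxt i) = v i', ht : v i = v (nxt i')
        exact absurd (by rw [← hv ht]; exact hv hs : nxt (nxt i') = i') (nxt_nxt_ne hL3 i')
      · -- true, false : hs : v i = v (nxt i'), ht : v (nxt i) = v i'
        exact absurd (by rw [← hv hs]; exact hv ht : nxt (nxt i') = i') (nxt_nxt_ne hL3 i')
      · exact hv hs
    have hsum : ∑ p : Fin 3, Fintype.card (I p) = L := by
      have := Fintype.card_congr (Equiv.sigmaFiberEquiv (fun j : Fin L => (f j).1))
      rw [Fintype.card_sigma] at this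
      simpa using this
    have hkL : ∀ p : Fin 3, Fintype.card (I p) ≤ L := by
      intro p
      calc Fintype.card (I p)
          ≤ ∑ q : Fin 3, Fintype.card (I q) :=
            Finset.single_le_sum (f := fun q => Fintype.card (I q)) (fun _ _ => Nat.zero_le _) (mem_univ p)
        _ = L := hsum
    have hone : ∀ p : Fin 3,
        (n - L + 1)^(Fintype.card (I p)) * Nat.factorial (n - Fintype.card (I p))
          ≤ Nat.factorial n := by
      intro p
      set k := Fintype.card (I p) with hkdef
      have hkL' : k ≤ L := hkL p
      have h1 : (n - L + 1)^k ≤ n.descFactorial k := by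
        refine le_trans (Nat.pow_le_pow_left (by omega : n - L + 1 ≤ n + 1 - k) k) ?_
        exact Nat.pow_sub_le_descFactorial n k
      calc (n - L + 1)^k * Nat.factorial (n - k)
          ≤ n.descFactorial k * Nat.factorial (n - k) := Nat.mul_le_mul_right _ h1
        _ = Nat.factorial n := by
            rw [mul_comm]; exact Nat.factorial_mul_descFactorial (le_trans (hkL p) hLn)
    calc (n - L + 1)^L * (Sf f).card
        ≤ (n - L + 1)^L * ((F 0) ×ˢ ((F 1) ×ˢ (F 2))).card :=
          Nat.mul_le_mul_left _ (Finset.card_le_card hprod)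
      _ = (n - L + 1)^L * ((F 0).card * ((F 1).card * (F 2).card)) := by
          rw [Finset.card_product, Finset.card_product]
      _ = ∏ p : Fin 3, ((n - L + 1)^(Fintype.card (I p)) * (F p).card) := by
          have hpow : (n - L + 1)^L = ∏ p : Fin 3, (n - L + 1)^(Fintype.card (I p)) := by
            rw [Finset.prod_pow_eq_pow_sum, hsum]
          rw [hpow, Fin.prod_univ_three, Fin.prod_univ_three]
          ring
      _ ≤ ∏ p : Fin 3, ((n - L + 1)^(Fintype.card (I p)) * Nat.factorial (n - Fintype.card (I p))) :=
          Finset.prod_le_prod' (fun p _ => Nat.mul_le_mul_left _ (hk p))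
      _ ≤ ∏ p : Fin 3, Nat.factorial n := Finset.prod_le_prod' (fun p _ => hone p)
      _ = (Nat.factorial n)^3 := by rw [Fin.prod_univ_three]; ring
  calc (n - L + 1)^L * (univ.filter (fun σ : P × P × P =>
        ∀ i : Fin L, (permGraph σ.1 σ.2.1 σ.2.2).Adj (v i) (v (nxt i)))).card
      ≤ (n - L + 1)^L * (univ.biUnion Sf).card := Nat.mul_le_mul_left _ hcard
    _ ≤ (n - L + 1)^L * ∑ f : Fin L → Fin 3 × Bool, (Sf f).card := Nat.mul_le_mul_left _ hbi
    _ = ∑ f : Fin L → Fin 3 × Bool, (n - L + 1)^L * (Sf f).card := by rw [Finset.mul_sum]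
    _ ≤ ∑ _f : Fin L → Fin 3 × Bool, (Nat.factorial n)^3 := Finset.sum_le_sum (fun f _ => hf f)
    _ = 6^L * (Nat.factorial n)^3 := by
        rw [Finset.sum_const, Finset.card_univ, Fintype.card_fun]
        simp [smul_eq_mul]

lemma short_le_sum {V : Type} [Fintype V] [DecidableEq V] (G : SimpleGraph V)
    [DecidableRel G.Adj] (K : ℝ) :
    shortCycleCount G K ≤ ∑ L ∈ Finset.range (⌊K⌋₊ + 1),
      (univ.filter (fun v : Fin L → V =>
        3 ≤ L ∧ Function.Injective v ∧ ∀ i, G.Adj (v i) (v (nxt i)))).card := by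
  classical
  set M := ⌊K⌋₊ with hM
  set S : Set G.Subgraph := {H : G.Subgraph | ∃ (v : V) (w : G.Walk v v),
      w.IsCycle ∧ (w.length : ℝ) ≤ K ∧ w.toSubgraph = H} with hS
  set T := Σ L : Fin (M+1), (Fin L.val → V) with hT
  set pred : T → Prop := fun t => 3 ≤ t.1.val ∧ Function.Injective t.2 ∧
      ∀ i, G.Adj (t.2 i) (t.2 (nxt i)) with hpred
  have heq_fun_apply : ∀ {n n' : ℕ} (h : n = n') (g : Fin n → V) (g' : Fin n' → V),
      HEq g g' → ∀ (i : ℕ) (hi : i < n), g ⟨i, hi⟩ = g' ⟨i, h ▸ hi⟩ := by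
    intro n n' h g g' hg i hi
    subst h
    rw [eq_of_heq hg]
  let ψ : G.Subgraph → T := fun H =>
    if h : H ∈ S then
      ⟨⟨h.choose_spec.choose.length,
          Nat.lt_succ_of_le (Nat.le_floor h.choose_spec.choose_spec.2.1)⟩,
        fun i => h.choose_spec.choose.getVert i.val⟩
    else ⟨⟨0, Nat.succ_pos M⟩, fun i => i.elim0⟩
  have hψS : ∀ H ∈ S, pred (ψ H) := by
    intro H hH
    obtain ⟨hcyc, hlen, hsg⟩ := hH.choose_spec.choose_spec
    set w := hH.choose_spec.choose with hwdef
    have h3 := hcyc.three_le_length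
    simp only [ψ, dif_pos hH, hpred]
    refine ⟨h3, ?_, ?_⟩
    · intro i j hij
      exact Fin.ext (cycle_getVert_inj hcyc i.isLt j.isLt hij)
    · intro i
      have hi : (i : ℕ) < w.length := i.isLt
      show G.Adj (w.getVert i.val) (w.getVert (nxt i).val)
      rcases Nat.lt_or_ge (i.val + 1) w.length with h1 | h1
      · have hv : ((nxt i).val : ℕ) = i.val + 1 := Nat.mod_eq_of_lt h1
        rw [hv]
        exact w.adj_getVert_succ (by omega)
      · have hieq : (i : ℕ) + 1 = w.length := by omega
        have hv : ((nxt i).val : ℕ) = 0 := by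
          show (i.val + 1) % w.length = 0
          rw [hieq, Nat.mod_self]
        rw [hv, Walk.getVert_zero]
        have h2 := w.adj_getVert_succ (show (i:ℕ) < w.length by omega)
        rw [hieq, w.getVert_length] at h2
        exact h2
  have hinj : Set.InjOn ψ S := by
    intro H hH H' hH' heq
    obtain ⟨hcyc, hlen, hsg⟩ := hH.choose_spec.choose_spec
    obtain ⟨hcyc', hlen', hsg'⟩ := hH'.choose_spec.choose_spec
    set u := hH.choose with hu
    set w := hH.choose_spec.choose with hwdef
    set u' := hH'.choose with hu'
    set w' := hH'.choose_spec.choose with hwdef'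
    simp only [ψ, dif_pos hH, dif_pos hH'] at heq
    rw [Sigma.ext_iff] at heq
    obtain ⟨h1, h2⟩ := heq
    have hL : w.length = w'.length := congrArg Fin.val h1
    have hgv : ∀ (i : ℕ), i < w.length → w.getVert i = w'.getVert i := by
      intro i hi
      exact heq_fun_apply hL (fun i : Fin w.length => w.getVert i.val)
        (fun i : Fin w'.length => w'.getVert i.val) h2 i hi
    have h3 := hcyc.three_le_length
    have hgva : ∀ i, w.getVert i = w'.getVert i := by
      intro i
      rcases Nat.lt_or_ge i w.length with hi | hi
      · exact hgv i hi
      · rw [Walk.getVert_of_length_le w hi, Walk.getVert_of_length_le w' (by omega)]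
        have h0 := hgv 0 (by omega)
        rwa [Walk.getVert_zero, Walk.getVert_zero] at h0
    rw [← hsg, ← hsg']
    exact walk_toSubgraph_eq_of_getVert w w' hL hgva
  have himg : ψ '' S ⊆ {t : T | pred t} := by
    rintro t ⟨H, hH, rfl⟩; exact hψS H hH
  have hcount : S.ncard ≤ Nat.card {t : T // pred t} := by
    calc S.ncard = (ψ '' S).ncard := (Set.ncard_image_of_injOn hinj).symm
      _ ≤ {t : T | pred t}.ncard := Set.ncard_le_ncard himg (Set.toFinite _)
      _ = Nat.card {t : T // pred t} := rfl
  refine le_trans hcount ?_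
  rw [Nat.card_eq_fintype_card]
  have hcard : Fintype.card {t : T // pred t}
      = ∑ L : Fin (M+1), Fintype.card {v : Fin L.val → V //
          3 ≤ L.val ∧ Function.Injective v ∧ ∀ i, G.Adj (v i) (v (nxt i))} := by
    rw [← Fintype.card_sigma]
    refine Fintype.card_congr ⟨fun t => ⟨t.1.1, t.1.2, t.2⟩, fun s => ⟨⟨s.1, s.2.1⟩, s.2.2⟩,
      fun t => by rcases t with ⟨⟨L, v⟩, h⟩; rfl, fun s => by rcases s with ⟨L, v, h⟩; rfl⟩
  rw [hcard, ← Fin.sum_univ_eq_sum_range (fun L => (univ.filter (fun v : Fin L → V =>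
        3 ≤ L ∧ Function.Injective v ∧ ∀ i, G.Adj (v i) (v (nxt i)))).card) (M+1)]
  refine le_of_eq (Finset.sum_congr rfl (fun L _ => ?_))
  rw [Fintype.card_subtype]

lemma geom_twelve (m : ℕ) : ∑ i ∈ Finset.range m, 12^i ≤ 12^m := by
  induction m with
  | zero => simp
  | succ m ih =>
    rw [Finset.sum_range_succ, pow_succ]
    omega

lemma sum_cyc_bound (L : ℕ) (hLn : 2 * L ≤ Fintype.card V) :
    ∑ σ : Equiv.Perm V × Equiv.Perm V × Equiv.Perm V,
      (univ.filter (fun v : Fin L → V => 3 ≤ L ∧ Function.Injective v ∧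
        ∀ i, (permGraph σ.1 σ.2.1 σ.2.2).Adj (v i) (v (nxt i)))).card
      ≤ 12^L * (Nat.factorial (Fintype.card V))^3 := by
  -- swap the sum
  have hswap : ∑ σ : Equiv.Perm V × Equiv.Perm V × Equiv.Perm V,
      (univ.filter (fun v : Fin L → V => 3 ≤ L ∧ Function.Injective v ∧
        ∀ i, (permGraph σ.1 σ.2.1 σ.2.2).Adj (v i) (v (nxt i)))).card
      = ∑ v : Fin L → V, (univ.filter (fun σ : Equiv.Perm V × Equiv.Perm V × Equiv.Perm V =>
          3 ≤ L ∧ Function.Injective v ∧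
            ∀ i, (permGraph σ.1 σ.2.1 σ.2.2).Adj (v i) (v (nxt i)))).card := by
    simp only [Finset.card_filter]
    rw [Finset.sum_comm]
  rw [hswap]
  have hper : ∀ v : Fin L → V,
      ((Fintype.card V) - L + 1)^L * (univ.filter (fun σ : Equiv.Perm V × Equiv.Perm V × Equiv.Perm V =>
          3 ≤ L ∧ Function.Injective v ∧
            ∀ i, (permGraph σ.1 σ.2.1 σ.2.2).Adj (v i) (v (nxt i)))).card
        ≤ 6^L * (Nat.factorial (Fintype.card V))^3 := by
    intro v
    by_cases h : 3 ≤ L ∧ Function.Injective v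
    · calc ((Fintype.card V) - L + 1)^L * (univ.filter (fun σ : Equiv.Perm V × Equiv.Perm V × Equiv.Perm V =>
            3 ≤ L ∧ Function.Injective v ∧
              ∀ i, (permGraph σ.1 σ.2.1 σ.2.2).Adj (v i) (v (nxt i)))).card
          ≤ ((Fintype.card V) - L + 1)^L * (univ.filter (fun σ : Equiv.Perm V × Equiv.Perm V × Equiv.Perm V =>
              ∀ i, (permGraph σ.1 σ.2.1 σ.2.2).Adj (v i) (v (nxt i)))).card := by
            apply Nat.mul_le_mul_left
            apply Finset.card_le_card
            intro σ hσ
            rw [Finset.mem_filter] at hσ ⊢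
            exact ⟨hσ.1, hσ.2.2.2⟩
        _ ≤ 6^L * (Nat.factorial (Fintype.card V))^3 := cycle_perm_count h.1 (le_trans (Nat.le_mul_of_pos_left L (by norm_num)) hLn) v h.2
    · have : (univ.filter (fun σ : Equiv.Perm V × Equiv.Perm V × Equiv.Perm V =>
          3 ≤ L ∧ Function.Injective v ∧
            ∀ i, (permGraph σ.1 σ.2.1 σ.2.2).Adj (v i) (v (nxt i)))).card = 0 := by
        rw [Finset.card_eq_zero, Finset.filter_eq_empty_iff]
        intro σ _
        rintro ⟨h1, h2, _⟩
        exact h ⟨h1, h2⟩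
      rw [this]
      simp
  -- combine
  have hmaster : ((Fintype.card V) - L + 1)^L * ∑ v : Fin L → V,
      (univ.filter (fun σ : Equiv.Perm V × Equiv.Perm V × Equiv.Perm V =>
          3 ≤ L ∧ Function.Injective v ∧
            ∀ i, (permGraph σ.1 σ.2.1 σ.2.2).Adj (v i) (v (nxt i)))).card
      ≤ (Fintype.card V)^L * (6^L * (Nat.factorial (Fintype.card V))^3) := by
    rw [Finset.mul_sum]
    calc ∑ v : Fin L → V, ((Fintype.card V) - L + 1)^L *
          (univ.filter (fun σ : Equiv.Perm V × Equiv.Perm V × Equiv.Perm V =>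
            3 ≤ L ∧ Function.Injective v ∧
              ∀ i, (permGraph σ.1 σ.2.1 σ.2.2).Adj (v i) (v (nxt i)))).card
        ≤ ∑ _v : Fin L → V, 6^L * (Nat.factorial (Fintype.card V))^3 :=
          Finset.sum_le_sum (fun v _ => hper v)
      _ = (Fintype.card V)^L * (6^L * (Nat.factorial (Fintype.card V))^3) := by
          rw [Finset.sum_const, Finset.card_univ, Fintype.card_fun, Fintype.card_fin, smul_eq_mul]
  have hpos : 0 < ((Fintype.card V) - L + 1)^L := Nat.pow_pos (Nat.succ_pos _)
  refine Nat.le_of_mul_le_mul_left ?_ hpos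
  calc ((Fintype.card V) - L + 1)^L * _ ≤ (Fintype.card V)^L * (6^L * (Nat.factorial (Fintype.card V))^3) := hmaster
    _ ≤ ((Fintype.card V) - L + 1)^L * (12^L * (Nat.factorial (Fintype.card V))^3) := by
        have h6 : (Fintype.card V)^L * 6^L ≤ ((Fintype.card V) - L + 1)^L * 12^L := by
          rw [← Nat.mul_pow, ← Nat.mul_pow]
          exact Nat.pow_le_pow_left (by clear * - hLn; omega) L
        calc (Fintype.card V)^L * (6^L * (Nat.factorial (Fintype.card V))^3) = ((Fintype.card V)^L * 6^L) * (Nat.factorial (Fintype.card V))^3 := by ring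
          _ ≤ (((Fintype.card V) - L + 1)^L * 12^L) * (Nat.factorial (Fintype.card V))^3 := Nat.mul_le_mul_right _ h6
          _ = ((Fintype.card V) - L + 1)^L * (12^L * (Nat.factorial (Fintype.card V))^3) := by ring

theorem stmt_9 :
    ∃ N : ℕ, ∀ (V : Type) [Fintype V] [DecidableEq V], N ≤ Fintype.card V →
      (∑ σ : Equiv.Perm V × Equiv.Perm V × Equiv.Perm V,
          (shortCycleCount (permGraph σ.1 σ.2.1 σ.2.2)
            (Real.logb 2 (Fintype.card V) / 100) : ℝ))
          / (Fintype.card (Equiv.Perm V × Equiv.Perm V × Equiv.Perm V) : ℝ)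
        ≤ (Fintype.card V : ℝ) ^ (0.1 : ℝ) := by
  refine ⟨2^100, ?_⟩
  intro V _ _ hN
  have hn1 : 1 ≤ Fintype.card V := le_trans (by norm_num) hN
  have hnR : (1:ℝ) ≤ (Fintype.card V : ℝ) := by exact_mod_cast hn1
  set K : ℝ := Real.logb 2 (Fintype.card V) / 100 with hKdef
  have hK0 : 0 ≤ K := by
    apply div_nonneg _ (by norm_num)
    exact Real.logb_nonneg (by norm_num) hnR
  have hlog2 : (0.6931471803 : ℝ) < Real.log 2 := Real.log_two_gt_d9
  have hlogn0 : 0 ≤ Real.log (Fintype.card V) := Real.log_nonneg hnR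
  have hMK : (⌊K⌋₊ : ℝ) ≤ K := Nat.floor_le hK0
  -- 2 * ⌊K⌋₊ ≤ n
  have hMn : 2 * ⌊K⌋₊ ≤ Fintype.card V := by
    have h1 : Real.log (Fintype.card V) ≤ (Fintype.card V : ℝ) - 1 :=
      Real.log_le_sub_one_of_pos (by linarith)
    have h2 : K = Real.log (Fintype.card V) / Real.log 2 / 100 := by
      rw [hKdef, Real.logb]
    have h3 : K ≤ ((Fintype.card V : ℝ) - 1) / 50 := by
      rw [h2]
      rw [div_div, div_le_div_iff₀ (by positivity) (by norm_num)]
      have hl2 : (1:ℝ)/2 ≤ Real.log 2 := by linarith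
      nlinarith [mul_le_mul_of_nonneg_right h1 (by norm_num : (0:ℝ) ≤ 50),
        mul_le_mul_of_nonneg_left (show (50:ℝ) ≤ Real.log 2 * 100 by linarith)
          (show (0:ℝ) ≤ (Fintype.card V : ℝ) - 1 by linarith)]
    have h4 : 2 * (⌊K⌋₊ : ℝ) ≤ (Fintype.card V : ℝ) := by
      calc 2 * (⌊K⌋₊ : ℝ) ≤ 2 * K := by linarith
        _ ≤ 2 * (((Fintype.card V : ℝ) - 1) / 50) := by linarith
        _ ≤ (Fintype.card V : ℝ) := by linarith
    exact_mod_cast h4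
  -- numerator bound (in ℕ)
  have hnum : (∑ σ : Equiv.Perm V × Equiv.Perm V × Equiv.Perm V,
      shortCycleCount (permGraph σ.1 σ.2.1 σ.2.2) K)
      ≤ 12^(⌊K⌋₊ + 1) * (Nat.factorial (Fintype.card V))^3 := by
    calc ∑ σ : Equiv.Perm V × Equiv.Perm V × Equiv.Perm V,
          shortCycleCount (permGraph σ.1 σ.2.1 σ.2.2) K
        ≤ ∑ σ : Equiv.Perm V × Equiv.Perm V × Equiv.Perm V,
            ∑ L ∈ Finset.range (⌊K⌋₊ + 1),
              (univ.filter (fun v : Fin L → V =>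
                3 ≤ L ∧ Function.Injective v ∧
                  ∀ i, (permGraph σ.1 σ.2.1 σ.2.2).Adj (v i) (v (nxt i)))).card :=
          Finset.sum_le_sum (fun σ _ => short_le_sum _ K)
      _ = ∑ L ∈ Finset.range (⌊K⌋₊ + 1), ∑ σ : Equiv.Perm V × Equiv.Perm V × Equiv.Perm V,
            (univ.filter (fun v : Fin L → V =>
              3 ≤ L ∧ Function.Injective v ∧
                ∀ i, (permGraph σ.1 σ.2.1 σ.2.2).Adj (v i) (v (nxt i)))).card :=
          Finset.sum_comm
      _ ≤ ∑ L ∈ Finset.range (⌊K⌋₊ + 1), 12^L * (Nat.factorial (Fintype.card V))^3 := by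
          refine Finset.sum_le_sum (fun L hL => sum_cyc_bound L ?_)
          rw [Finset.mem_range] at hL
          have : L ≤ ⌊K⌋₊ := by omega
          omega
      _ = (∑ L ∈ Finset.range (⌊K⌋₊ + 1), 12^L) * (Nat.factorial (Fintype.card V))^3 := by
          rw [← Finset.sum_mul]
      _ ≤ 12^(⌊K⌋₊ + 1) * (Nat.factorial (Fintype.card V))^3 :=
          Nat.mul_le_mul_right _ (geom_twelve _)
  -- denominator
  have hcardΩ : (Fintype.card (Equiv.Perm V × Equiv.Perm V × Equiv.Perm V) : ℝ)
      = ((Nat.factorial (Fintype.card V) : ℝ))^3 := by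
    rw [Fintype.card_prod, Fintype.card_prod, Fintype.card_perm]
    push_cast
    ring
  have hfacpos : (0:ℝ) < ((Nat.factorial (Fintype.card V) : ℝ))^3 := by positivity
  -- the key real bound : 12^(M+1) ≤ n^0.1
  have h12 : (12:ℝ)^(⌊K⌋₊ + 1) ≤ (Fintype.card V : ℝ) ^ (0.1:ℝ) := by
    have hnpos : (0:ℝ) < (Fintype.card V : ℝ) := by linarith
    have hc : (12:ℝ)^(⌊K⌋₊:ℕ) ≤ (Fintype.card V : ℝ) ^ (0.04:ℝ) := by
      rw [← Real.rpow_natCast 12 ⌊K⌋₊]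
      have step1 : (12:ℝ) ^ ((⌊K⌋₊:ℕ):ℝ) ≤ (12:ℝ) ^ K :=
        (Real.rpow_le_rpow_left_iff (by norm_num : (1:ℝ) < 12)).mpr hMK
      refine le_trans step1 ?_
      rw [Real.rpow_def_of_pos (by norm_num), Real.rpow_def_of_pos hnpos]
      apply Real.exp_le_exp.mpr
      have hlog12 : Real.log 12 ≤ 4 * Real.log 2 := by
        calc Real.log 12 ≤ Real.log 16 := Real.log_le_log (by norm_num) (by norm_num)
          _ = 4 * Real.log 2 := by
              rw [show (16:ℝ) = 2^4 by norm_num, Real.log_pow]; push_cast; ring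
      have hKval : K = Real.log (Fintype.card V) / Real.log 2 / 100 := by
        rw [hKdef, Real.logb]
      rw [hKval, div_div, mul_comm, div_mul_eq_mul_div,
        div_le_iff₀ (by positivity : (0:ℝ) < Real.log 2 * 100)]
      nlinarith [mul_le_mul_of_nonneg_left hlog12 hlogn0]
    have h06 : (12:ℝ) ≤ (Fintype.card V : ℝ) ^ (0.06:ℝ) := by
      have hbase : ((2:ℝ)^(100:ℕ)) ≤ (Fintype.card V : ℝ) := by exact_mod_cast hN
      calc (12:ℝ) ≤ ((2:ℝ)^(100:ℕ)) ^ (0.06:ℝ) := by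
            have e1 : ((2:ℝ)^(100:ℕ)) ^ (0.06:ℝ) = (2:ℝ) ^ ((100:ℝ) * 0.06) := by
              rw [← Real.rpow_natCast 2 100, ← Real.rpow_mul (by norm_num)]
              norm_num
            rw [e1, show (100:ℝ) * 0.06 = 6 by norm_num,
              show (6:ℝ) = ((6:ℕ):ℝ) by norm_num, Real.rpow_natCast]
            norm_num
        _ ≤ (Fintype.card V : ℝ) ^ (0.06:ℝ) :=
            Real.rpow_le_rpow (by positivity) hbase (by norm_num)
    calc (12:ℝ)^(⌊K⌋₊ + 1) = 12 * (12:ℝ)^(⌊K⌋₊:ℕ) := by ring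
      _ ≤ (Fintype.card V : ℝ) ^ (0.06:ℝ) * (Fintype.card V : ℝ) ^ (0.04:ℝ) := by
          apply mul_le_mul h06 hc (by positivity) (by positivity)
      _ = (Fintype.card V : ℝ) ^ (0.1:ℝ) := by
          rw [← Real.rpow_add hnpos]
          norm_num
  -- finish
  rw [div_le_iff₀ (by rw [hcardΩ]; exact hfacpos), hcardΩ]
  have hnumR : (∑ σ : Equiv.Perm V × Equiv.Perm V × Equiv.Perm V,
      (shortCycleCount (permGraph σ.1 σ.2.1 σ.2.2) K : ℝ))
      ≤ (12:ℝ)^(⌊K⌋₊ + 1) * ((Nat.factorial (Fintype.card V) : ℝ))^3 := by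
    have := hnum
    have hcast : ((∑ σ : Equiv.Perm V × Equiv.Perm V × Equiv.Perm V,
        shortCycleCount (permGraph σ.1 σ.2.1 σ.2.2) K : ℕ) : ℝ)
        ≤ ((12^(⌊K⌋₊ + 1) * (Nat.factorial (Fintype.card V))^3 : ℕ) : ℝ) := by
      exact_mod_cast this
    push_cast at hcast
    exact hcast
  calc (∑ σ : Equiv.Perm V × Equiv.Perm V × Equiv.Perm V,
        (shortCycleCount (permGraph σ.1 σ.2.1 σ.2.2) K : ℝ))
      ≤ (12:ℝ)^(⌊K⌋₊ + 1) * ((Nat.factorial (Fintype.card V) : ℝ))^3 := hnumR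
    _ ≤ (Fintype.card V : ℝ) ^ (0.1:ℝ) * ((Nat.factorial (Fintype.card V) : ℝ))^3 :=
        mul_le_mul_of_nonneg_right h12 (le_of_lt hfacpos)
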